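/- For all positive integers P and L, with M = 2P, the quadripartite template graph Q_{P,L} is a minor of the Chimera graph C_{M,M,L}: U1 is obtained by contracting, for each of the top P rows and each index l, the right vertices of that row over all columns; U2 by contracting, for each column and each index l, the left vertices of the top P rows of that column; U3 by contracting, for each column and each index l, the left vertices of the bottom P rows of that column; and U4 by contracting, for each of the bottom P rows and each index l, the right vertices of that row over all columns. -/

import Mathlib

/-- A minor model of `G` in `H`: a family of pairwise disjoint nonempty branch sets,
each inducing a connected subgraph of `H`, with an edge of `H` joining the branch sets
of any two adjacent vertices of `G`. -/
structure MinorModel {V W : Type*} (G : SimpleGraph V) (H : SimpleGraph W) where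
  B : V → Set W
  nonempty : ∀ v, (B v).Nonempty
  pairwiseDisjoint : ∀ ⦃u v : V⦄, u ≠ v → Disjoint (B u) (B v)
  connected : ∀ v, (H.induce (B v)).Connected
  edge : ∀ ⦃u v : V⦄, G.Adj u v → ∃ x ∈ B u, ∃ y ∈ B v, H.Adj x y

/-- `G` is a minor of `H`. -/
def SimpleGraph.IsMinorOf {V W : Type*} (G : SimpleGraph V) (H : SimpleGraph W) : Prop :=
  Nonempty (MinorModel G H)

/-- A bipartite assignment of `G` into the complete bipartite graph `K_{m1,m2}`. -/
def SimpleGraph.BipartiteAssignment {V : Type*} (G : SimpleGraph V) (m1 m2 : ℕ)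
    (A1 A2 : Set V) : Prop :=
  A1 ∪ A2 = Set.univ ∧ A1.ncard ≤ m1 ∧ A2.ncard ≤ m2 ∧
    ∀ ⦃u v : V⦄, G.Adj u v → (u ∈ A1 ∧ v ∈ A2) ∨ (u ∈ A2 ∧ v ∈ A1)

/-- `G − S` is bipartite, i.e. `S` is an odd cycle transversal of `G`. -/
def SimpleGraph.DelBipartite {V : Type*} (G : SimpleGraph V) (S : Set V) : Prop :=
  ∃ X Y : Set V, Disjoint X Y ∧ X ∪ Y = Sᶜ ∧
    ∀ ⦃u v : V⦄, G.Adj u v → u ∉ S → v ∉ S → (u ∈ X ∧ v ∈ Y) ∨ (u ∈ Y ∧ v ∈ X)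

/-- The Chimera graph `C_{M,M,L}`. A vertex `(i, j, s, l)` consists of a row `i`, a
column `j`, a side `s` (`false` = left, `true` = right), and an index `l`.
Edges: within each cell, every left vertex is adjacent to every right vertex;
left vertices with the same column and index and rows differing by 1 are adjacent;
right vertices with the same row and index and columns differing by 1 are adjacent. -/
def chimera (M L : ℕ) : SimpleGraph (Fin M × Fin M × Bool × Fin L) :=
  SimpleGraph.fromRel fun x y =>
    (x.1 = y.1 ∧ x.2.1 = y.2.1 ∧ x.2.2.1 = false ∧ y.2.2.1 = true) ∨
    (x.2.2.1 = false ∧ y.2.2.1 = false ∧ x.2.1 = y.2.1 ∧ x.2.2.2 = y.2.2.2 ∧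
      ((x.1 : ℕ) + 1 = (y.1 : ℕ) ∨ (y.1 : ℕ) + 1 = (x.1 : ℕ))) ∨
    (x.2.2.1 = true ∧ y.2.2.1 = true ∧ x.1 = y.1 ∧ x.2.2.2 = y.2.2.2 ∧
      ((x.2.1 : ℕ) + 1 = (y.2.1 : ℕ) ∨ (y.2.1 : ℕ) + 1 = (x.2.1 : ℕ)))

/-- The vertex set of the quadripartite template graph `Q_{P,L}`:
the four parts `U1, U2, U3, U4` with `|U1| = |U4| = P·L` and `|U2| = |U3| = 2·P·L`. -/
def QVert (P L : ℕ) : Type :=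
  Fin (P * L) ⊕ Fin (2 * P * L) ⊕ Fin (2 * P * L) ⊕ Fin (P * L)

/-- The quadripartite template graph `Q_{P,L}`: every vertex of `U1` is adjacent to every
vertex of `U2`, every vertex of `U3` is adjacent to every vertex of `U4`, and the `i`-th
vertex of `U2` is adjacent to the `i`-th vertex of `U3` (a perfect matching). -/
def qte (P L : ℕ) : SimpleGraph (QVert P L) :=
  SimpleGraph.fromRel fun x y =>
    match x, y with
    | Sum.inl _, Sum.inr (Sum.inl _) => True
    | Sum.inr (Sum.inl i), Sum.inr (Sum.inr (Sum.inl j)) => i = j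
    | Sum.inr (Sum.inr (Sum.inl _)), Sum.inr (Sum.inr (Sum.inr _)) => True
    | _, _ => False

namespace Stmt13

lemma chain_connected {W : Type*} (H : SimpleGraph W) {n : ℕ} (hn : 0 < n) (f : Fin n → W)
    (hadj : ∀ k (h : k + 1 < n), H.Adj (f ⟨k, Nat.lt_of_succ_lt h⟩) (f ⟨k + 1, h⟩)) :
    (H.induce (Set.range f)).Connected := by
  have hmem : ∀ k : Fin n, f k ∈ Set.range f := fun k => ⟨k, rfl⟩
  have key : ∀ m (hm : m < n),
      (H.induce (Set.range f)).Reachable ⟨f ⟨0, hn⟩, hmem _⟩ ⟨f ⟨m, hm⟩, hmem _⟩ := by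
    intro m
    induction m with
    | zero => intro _; rfl
    | succ k ih =>
      intro hm
      have hk : k < n := Nat.lt_of_succ_lt hm
      refine (ih hk).trans ?_
      exact SimpleGraph.Adj.reachable (by exact hadj k hm)
  have : Nonempty ↑(Set.range f) := ⟨⟨f ⟨0, hn⟩, hmem _⟩⟩
  refine ⟨?_⟩
  rintro ⟨x, hx⟩ ⟨y, hy⟩
  obtain ⟨a, rfl⟩ := hx
  obtain ⟨b, rfl⟩ := hy
  exact (key a.1 a.2).symm.trans (key b.1 b.2)

abbrev CV (P L : ℕ) := Fin (2 * P) × Fin (2 * P) × Bool × Fin L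

lemma enc_lt {r l n L : ℕ} (hr : r < n) (hl : l < L) : r * L + l < n * L :=
  calc r * L + l < r * L + L := by omega
    _ = (r + 1) * L := (Nat.succ_mul r L).symm
    _ ≤ n * L := Nat.mul_le_mul_right L hr

variable {P L : ℕ}

lemma divPL_lt (hL : 0 < L) (a : Fin (P * L)) : a.val / L < P :=
  (Nat.div_lt_iff_lt_mul hL).mpr a.isLt

lemma div2PL_lt (hL : 0 < L) (a : Fin (2 * P * L)) : a.val / L < 2 * P :=
  (Nat.div_lt_iff_lt_mul hL).mpr a.isLt

def rowT (hL : 0 < L) (a : Fin (P * L)) : Fin (2 * P) :=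
  ⟨a.val / L, by have := divPL_lt hL a; omega⟩

def col2 (hL : 0 < L) (a : Fin (2 * P * L)) : Fin (2 * P) := ⟨a.val / L, div2PL_lt hL a⟩

def idxL {n : ℕ} (hL : 0 < L) (a : Fin n) : Fin L := ⟨a.val % L, Nat.mod_lt _ hL⟩

def f1 (hL : 0 < L) (a : Fin (P * L)) (j : Fin (2 * P)) : CV P L :=
  (rowT hL a, j, true, idxL hL a)

def f2 (hL : 0 < L) (a : Fin (2 * P * L)) (i : Fin P) : CV P L :=
  (⟨i.val, by have := i.isLt; omega⟩, col2 hL a, false, idxL hL a)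

def f3 (hL : 0 < L) (a : Fin (2 * P * L)) (i : Fin P) : CV P L :=
  (⟨P + i.val, by have := i.isLt; omega⟩, col2 hL a, false, idxL hL a)

def f4 (hL : 0 < L) (a : Fin (P * L)) (j : Fin (2 * P)) : CV P L :=
  (⟨P + a.val / L, by have := divPL_lt hL a; omega⟩, j, true, idxL hL a)

def Bset (hL : 0 < L) : QVert P L → Set (CV P L)
  | Sum.inl a => Set.range (f1 hL a)
  | Sum.inr (Sum.inl a) => Set.range (f2 hL a)
  | Sum.inr (Sum.inr (Sum.inl a)) => Set.range (f3 hL a)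
  | Sum.inr (Sum.inr (Sum.inr a)) => Set.range (f4 hL a)

def g (x : CV P L) : QVert P L :=
  if _hs : x.2.2.1 = true then
    if h : x.1.val < P then
      Sum.inl ⟨x.1.val * L + x.2.2.2.val, enc_lt h x.2.2.2.isLt⟩
    else
      Sum.inr (Sum.inr (Sum.inr ⟨(x.1.val - P) * L + x.2.2.2.val,
        enc_lt (by have := x.1.isLt; omega) x.2.2.2.isLt⟩))
  else
    if _h : x.1.val < P then
      Sum.inr (Sum.inl ⟨x.2.1.val * L + x.2.2.2.val, enc_lt x.2.1.isLt x.2.2.2.isLt⟩)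
    else
      Sum.inr (Sum.inr (Sum.inl ⟨x.2.1.val * L + x.2.2.2.val, enc_lt x.2.1.isLt x.2.2.2.isLt⟩))

lemma g_Bset (hL : 0 < L) (v : QVert P L) {x : CV P L} (hx : x ∈ Bset hL v) : g x = v := by
  match v with
  | Sum.inl a =>
    obtain ⟨j, rfl⟩ := hx
    have h1 : a.val / L < P := divPL_lt hL a
    simp only [g, f1, rowT, idxL]
    simp only [Bool.true_eq_false, ↓reduceDIte, h1]
    congr 1
    apply Fin.ext
    show a.val / L * L + a.val % L = a.val
    rw [Nat.mul_comm]
    exact Nat.div_add_mod a.val L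
  | Sum.inr (Sum.inl a) =>
    obtain ⟨i, rfl⟩ := hx
    have h1 : i.val < P := i.isLt
    simp only [g, f2, col2, idxL]
    simp only [Bool.false_eq_true, ↓reduceDIte, h1]
    congr 2
    apply Fin.ext
    show a.val / L * L + a.val % L = a.val
    rw [Nat.mul_comm]
    exact Nat.div_add_mod a.val L
  | Sum.inr (Sum.inr (Sum.inl a)) =>
    obtain ⟨i, rfl⟩ := hx
    simp only [g, f3, col2, idxL]
    simp only [Bool.false_eq_true, ↓reduceDIte, (Nat.not_lt.mpr (Nat.le_add_right P _))]
    congr 3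
    apply Fin.ext
    show a.val / L * L + a.val % L = a.val
    rw [Nat.mul_comm]
    exact Nat.div_add_mod a.val L
  | Sum.inr (Sum.inr (Sum.inr a)) =>
    obtain ⟨j, rfl⟩ := hx
    simp only [g, f4, idxL]
    simp only [Bool.true_eq_false, ↓reduceDIte, (Nat.not_lt.mpr (Nat.le_add_right P _))]
    congr 3
    apply Fin.ext
    show (P + a.val / L - P) * L + a.val % L = a.val
    rw [Nat.add_sub_cancel_left, Nat.mul_comm]
    exact Nat.div_add_mod a.val L

-- chimera adjacency helpers
lemma adj_cell {x y : CV P L} (h1 : x.1 = y.1) (h2 : x.2.1 = y.2.1)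
    (hx : x.2.2.1 = false) (hy : y.2.2.1 = true) : (chimera (2 * P) L).Adj x y := by
  rw [chimera, SimpleGraph.fromRel_adj]
  refine ⟨?_, Or.inl (Or.inl ⟨h1, h2, hx, hy⟩)⟩
  intro h; rw [h] at hx; rw [hx] at hy; simp at hy

lemma adj_vert {x y : CV P L} (hx : x.2.2.1 = false) (hy : y.2.2.1 = false)
    (hc : x.2.1 = y.2.1) (hidx : x.2.2.2 = y.2.2.2)
    (hr : (x.1 : ℕ) + 1 = (y.1 : ℕ)) : (chimera (2 * P) L).Adj x y := by
  rw [chimera, SimpleGraph.fromRel_adj]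
  refine ⟨?_, Or.inl (Or.inr (Or.inl ⟨hx, hy, hc, hidx, Or.inl hr⟩))⟩
  intro h; rw [h] at hr; omega

lemma adj_horiz {x y : CV P L} (hx : x.2.2.1 = true) (hy : y.2.2.1 = true)
    (hrw : x.1 = y.1) (hidx : x.2.2.2 = y.2.2.2)
    (hc : (x.2.1 : ℕ) + 1 = (y.2.1 : ℕ)) : (chimera (2 * P) L).Adj x y := by
  rw [chimera, SimpleGraph.fromRel_adj]
  refine ⟨?_, Or.inl (Or.inr (Or.inr ⟨hx, hy, hrw, hidx, Or.inl hc⟩))⟩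
  intro h; rw [h] at hc; omega

end Stmt13

/-- For all positive integers `P` and `L`, with `M = 2P`, the quadripartite
template graph `Q_{P,L}` is a minor of the Chimera graph `C_{M,M,L}`. -/
theorem stmt13 (P L : ℕ) (hP : 0 < P) (hL : 0 < L) :
    (qte P L).IsMinorOf (chimera (2 * P) L) := by
  refine ⟨⟨Stmt13.Bset hL, ?_, ?_, ?_, ?_⟩⟩
  · -- nonempty
    rintro (a | a | a | a)
    · exact ⟨Stmt13.f1 hL a ⟨0, by omega⟩, Set.mem_range_self _⟩
    · exact ⟨Stmt13.f2 hL a ⟨0, hP⟩, Set.mem_range_self _⟩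
    · exact ⟨Stmt13.f3 hL a ⟨0, hP⟩, Set.mem_range_self _⟩
    · exact ⟨Stmt13.f4 hL a ⟨0, by omega⟩, Set.mem_range_self _⟩
  · -- disjoint
    intro u v huv
    rw [Set.disjoint_left]
    intro x hxu hxv
    exact huv ((Stmt13.g_Bset hL u hxu).symm.trans (Stmt13.g_Bset hL v hxv))
  · -- connected
    rintro (a | a | a | a)
    · refine Stmt13.chain_connected _ (by omega) (Stmt13.f1 hL a) ?_
      intro k h
      exact Stmt13.adj_horiz rfl rfl rfl rfl rfl
    · refine Stmt13.chain_connected _ hP (Stmt13.f2 hL a) ?_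
      intro k h
      exact Stmt13.adj_vert rfl rfl rfl rfl rfl
    · refine Stmt13.chain_connected _ hP (Stmt13.f3 hL a) ?_
      intro k h
      exact Stmt13.adj_vert rfl rfl rfl rfl rfl
    · refine Stmt13.chain_connected _ (by omega) (Stmt13.f4 hL a) ?_
      intro k h
      exact Stmt13.adj_horiz rfl rfl rfl rfl rfl
  · -- edges
    intro u v huv
    rw [qte, SimpleGraph.fromRel_adj] at huv
    obtain ⟨hne, h⟩ := huv
    rcases u with a | a | a | a <;> rcases v with b | b | b | b <;> simp at h <;> clear hne
    · -- U1 a -- U2 b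
      refine ⟨Stmt13.f1 hL a (Stmt13.col2 hL b), Set.mem_range_self _,
        Stmt13.f2 hL b ⟨a.val / L, Stmt13.divPL_lt hL a⟩, Set.mem_range_self _, ?_⟩
      exact SimpleGraph.Adj.symm (Stmt13.adj_cell rfl rfl rfl rfl)
    · -- U2 b -- U1 a (symmetric)
      exact ⟨Stmt13.f2 hL a ⟨b.val / L, Stmt13.divPL_lt hL b⟩, Set.mem_range_self _,
        Stmt13.f1 hL b (Stmt13.col2 hL a), Set.mem_range_self _,
        Stmt13.adj_cell rfl rfl rfl rfl⟩
    · -- U2 a -- U3 b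
      obtain rfl : a = b := by tauto
      exact ⟨Stmt13.f2 hL a ⟨P - 1, by omega⟩, Set.mem_range_self _,
        Stmt13.f3 hL a ⟨0, hP⟩, Set.mem_range_self _,
        Stmt13.adj_vert rfl rfl rfl rfl (by show P - 1 + 1 = P + 0; omega)⟩
    · -- U3 b -- U2 a
      obtain rfl : a = b := by tauto
      refine ⟨Stmt13.f3 hL a ⟨0, hP⟩, Set.mem_range_self _,
        Stmt13.f2 hL a ⟨P - 1, by omega⟩, Set.mem_range_self _, ?_⟩
      exact SimpleGraph.Adj.symm (Stmt13.adj_vert rfl rfl rfl rfl (by show P - 1 + 1 = P + 0; omega))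
    · -- U3 a -- U4 b
      exact ⟨Stmt13.f3 hL a ⟨b.val / L, Stmt13.divPL_lt hL b⟩, Set.mem_range_self _,
        Stmt13.f4 hL b (Stmt13.col2 hL a), Set.mem_range_self _,
        Stmt13.adj_cell rfl rfl rfl rfl⟩
    · -- U4 b -- U3 a
      refine ⟨Stmt13.f4 hL a (Stmt13.col2 hL b), Set.mem_range_self _,
        Stmt13.f3 hL b ⟨a.val / L, Stmt13.divPL_lt hL a⟩, Set.mem_range_self _, ?_⟩
      exact SimpleGraph.Adj.symm (Stmt13.adj_cell rfl rfl rfl rfl)
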